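/- Let G = (V,E) be a finite undirected graph with V partitioned into L and F, let S ⊆ L and u ∈ S. Then w^L(G[V\S]) ≤ w^L(G[(V\S) ∪ {u}]), i.e., revealing an additional leader node u to the common pool never decreases the minimum number of leader nodes covered in a maximum matching. -/

import Mathlib

variable {V : Type*} [Fintype V] [DecidableEq V]

/-- A matching of `G` all of whose edges lie inside the vertex set `W`
(i.e. a matching of the induced subgraph `G[W]`). -/
def IsMatchingOn (G : SimpleGraph V) (W : Set V) (M : Finset (Sym2 V)) : Prop :=
  (∀ e ∈ M, e ∈ G.edgeSet) ∧ (∀ e ∈ M, ∀ v ∈ e, v ∈ W) ∧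
  (M : Set (Sym2 V)).Pairwise fun e f => ∀ v, v ∈ e → v ∉ f

/-- Vertices covered by a set of edges. -/
def mcovered (M : Finset (Sym2 V)) : Set V := {v | ∃ e ∈ M, v ∈ e}

/-- `w(G[W])`: maximum cardinality of a matching of `G[W]`. -/
noncomputable def mmax (G : SimpleGraph V) (W : Set V) : ℕ :=
  sSup {n | ∃ M, IsMatchingOn G W M ∧ M.card = n}

/-- `w^L(G[W])`: minimum number of `L`-vertices covered over maximum matchings of `G[W]`. -/
noncomputable def mwL (G : SimpleGraph V) (L W : Set V) : ℕ :=
  sInf {k | ∃ M, IsMatchingOn G W M ∧ M.card = mmax G W ∧ (mcovered M ∩ L).ncard = k}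


set_option linter.unusedSectionVars false
set_option linter.unusedVariables false

def PM (M : Finset (Sym2 V)) : Prop :=
  (M : Set (Sym2 V)).Pairwise fun e f => ∀ v, v ∈ e → v ∉ f

lemma PM.eq_edge {M : Finset (Sym2 V)} (h : PM M) {e f : Sym2 V} {v : V}
    (he : e ∈ M) (hf : f ∈ M) (hve : v ∈ e) (hvf : v ∈ f) : e = f := by
  by_contra hne
  exact h he hf hne v hve hvf

lemma PM.ss {M N : Finset (Sym2 V)} (h : PM M) (hs : N ⊆ M) : PM N :=
  h.mono (Finset.coe_subset.mpr hs)

lemma PM.ins {M : Finset (Sym2 V)} (h : PM M) {e : Sym2 V}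
    (he : ∀ v ∈ e, v ∉ mcovered M) : PM (insert e M) := by
  have hsymm : Symmetric (fun e f : Sym2 V => ∀ v, v ∈ e → v ∉ f) :=
    fun a b hab v hv hv' => hab v hv' hv
  have : Std.Symm (fun e f : Sym2 V => ∀ v, v ∈ e → v ∉ f) := ⟨fun a b hab => hsymm hab⟩
  rw [PM, Finset.coe_insert, Set.pairwise_insert_of_symm]
  exact ⟨h, fun f hf _ v hv hvf => he v hv ⟨f, hf, hvf⟩⟩

lemma mcovered_mono {M N : Finset (Sym2 V)} (h : M ⊆ N) : mcovered M ⊆ mcovered N :=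
  fun _ ⟨e, he, hv⟩ => ⟨e, h he, hv⟩

lemma mcovered_union {M N : Finset (Sym2 V)} :
    mcovered (M ∪ N) = mcovered M ∪ mcovered N := by
  ext v
  constructor
  · rintro ⟨e, he, hv⟩
    rcases Finset.mem_union.mp he with h | h
    · exact Or.inl ⟨e, h, hv⟩
    · exact Or.inr ⟨e, h, hv⟩
  · rintro (⟨e, he, hv⟩ | ⟨e, he, hv⟩)
    · exact ⟨e, Finset.mem_union_left _ he, hv⟩
    · exact ⟨e, Finset.mem_union_right _ he, hv⟩

lemma mcovered_insert {M : Finset (Sym2 V)} {e : Sym2 V} {v : V} :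
    v ∈ mcovered (insert e M) ↔ v ∈ e ∨ v ∈ mcovered M := by
  constructor
  · rintro ⟨f, hf, hv⟩
    rcases Finset.mem_insert.mp hf with rfl | h
    · exact Or.inl hv
    · exact Or.inr ⟨f, h, hv⟩
  · rintro (h | ⟨f, hf, hv⟩)
    · exact ⟨e, Finset.mem_insert_self _ _, h⟩
    · exact ⟨f, Finset.mem_insert_of_mem hf, hv⟩

lemma path_lemma (N : Finset (Sym2 V)) :
    ∀ (M : Finset (Sym2 V)) (u : V), PM M → PM N →
    (∀ e ∈ M, ¬ e.IsDiag) → (∀ e ∈ N, ¬ e.IsDiag) →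
    u ∈ mcovered M → u ∉ mcovered N →
    (∃ P, PM P ∧ P ⊆ M ∪ N ∧ P.card = M.card ∧ u ∉ mcovered P ∧
      mcovered M \ {u} ⊆ mcovered P ∧ ∃ z, mcovered P ⊆ (mcovered M \ {u}) ∪ {z}) ∨
    (∃ P, PM P ∧ P ⊆ M ∪ N ∧ P.card = N.card + 1) := by
  induction N using Finset.strongInduction with
  | _ N ih =>
    intro M u hM hN hMd hNd huM huN
    obtain ⟨e, heM, hue⟩ := huM
    obtain ⟨v, rfl⟩ := Sym2.mem_iff_exists.mp hue
    have huv : u ≠ v := by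
      intro h; exact hMd _ heM (by rw [h]; exact Sym2.mk_isDiag_iff.mpr rfl)
    have huMonly : ∀ g ∈ M, u ∈ g → g = s(u, v) :=
      fun g hg hug => hM.eq_edge hg heM hug (Sym2.mem_mk_left u v)
    have hvMonly : ∀ g ∈ M, v ∈ g → g = s(u, v) :=
      fun g hg hvg => hM.eq_edge hg heM hvg (Sym2.mem_mk_right u v)
    by_cases hvN : v ∈ mcovered N
    · obtain ⟨f, hfN, hvf⟩ := hvN
      obtain ⟨z, rfl⟩ := Sym2.mem_iff_exists.mp hvf
      have hvz : v ≠ z := by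
        intro h; exact hNd _ hfN (by rw [h]; exact Sym2.mk_isDiag_iff.mpr rfl)
      have hzu : z ≠ u := by
        rintro rfl; exact huN ⟨s(v, z), hfN, Sym2.mem_mk_right v z⟩
      have hvNonly : ∀ g ∈ N, v ∈ g → g = s(v, z) :=
        fun g hg hvg => hN.eq_edge hg hfN hvg (Sym2.mem_mk_left v z)
      have hzNonly : ∀ g ∈ N, z ∈ g → g = s(v, z) :=
        fun g hg hzg => hN.eq_edge hg hfN hzg (Sym2.mem_mk_right v z)
      have hze : z ∉ s(u, v) := by
        rw [Sym2.mem_iff]; push_neg; exact ⟨hzu, fun h => hvz h.symm⟩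
      by_cases hzM : z ∈ mcovered M
      · -- recursive case
        obtain ⟨g, hgM, hzg⟩ := hzM
        have hge : g ≠ s(u, v) := fun h => hze (h ▸ hzg)
        set N1 := N.erase (s(v, z)) with hN1def
        set M1 := M.erase (s(u, v)) with hM1def
        have hfe : s(v,z) ≠ s(u,v) := by
          intro h
          exact hze (h ▸ Sym2.mem_mk_right v z)
        -- basic non-coverage facts
        have huM1 : u ∉ mcovered M1 := by
          rintro ⟨g', hg', hug'⟩
          exact (Finset.mem_erase.mp hg').1 (huMonly g' (Finset.mem_of_mem_erase hg') hug')
        have hvM1 : v ∉ mcovered M1 := by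
          rintro ⟨g', hg', hvg'⟩
          exact (Finset.mem_erase.mp hg').1 (hvMonly g' (Finset.mem_of_mem_erase hg') hvg')
        have hvN1 : v ∉ mcovered N1 := by
          rintro ⟨g', hg', hvg'⟩
          exact (Finset.mem_erase.mp hg').1 (hvNonly g' (Finset.mem_of_mem_erase hg') hvg')
        have huN1 : u ∉ mcovered N1 := fun h => huN (mcovered_mono (Finset.erase_subset _ _) h)
        have hzM1 : z ∈ mcovered M1 := ⟨g, Finset.mem_erase.mpr ⟨hge, hgM⟩, hzg⟩
        have hzN1 : z ∉ mcovered N1 := by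
          rintro ⟨g', hg', hzg'⟩
          exact (Finset.mem_erase.mp hg').1 (hzNonly g' (Finset.mem_of_mem_erase hg') hzg')
        have hMcard : 1 ≤ M.card := Finset.card_pos.mpr ⟨_, heM⟩
        have hNcard : 1 ≤ N.card := Finset.card_pos.mpr ⟨_, hfN⟩
        rcases ih N1 (Finset.erase_ssubset hfN) M1 z (hM.ss (Finset.erase_subset _ _))
            (hN.ss (Finset.erase_subset _ _))
            (fun e' he' => hMd e' (Finset.mem_of_mem_erase he'))
            (fun e' he' => hNd e' (Finset.mem_of_mem_erase he'))
            hzM1 hzN1 with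
          (⟨P1, hP1, hP1sub, hP1card, hzP1, hlow, z', hup⟩ | ⟨P1, hP1, hP1sub, hP1card⟩)
        · -- case (a1): augment with f = s(v,z)
          left
          have hcovP1 : mcovered P1 ⊆ mcovered M1 ∪ mcovered N1 := by
            intro w hw
            have := mcovered_mono hP1sub hw
            rwa [mcovered_union] at this
          have hvP1 : v ∉ mcovered P1 := fun h => (hcovP1 h).elim hvM1 hvN1
          have huP1 : u ∉ mcovered P1 := fun h => (hcovP1 h).elim huM1 huN1
          have hfP1 : s(v, z) ∉ P1 := fun h => hvP1 ⟨_, h, Sym2.mem_mk_left v z⟩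
          refine ⟨insert (s(v, z)) P1, ?_, ?_, ?_, ?_, ?_, ?_⟩
          · refine hP1.ins ?_
            intro w hw
            rcases Sym2.mem_iff.mp hw with rfl | rfl
            · exact hvP1
            · exact hzP1
          · intro p hp
            rcases Finset.mem_insert.mp hp with rfl | hp
            · exact Finset.mem_union_right _ hfN
            · refine (Finset.union_subset_union (Finset.erase_subset _ _)
                (Finset.erase_subset _ _)) (hP1sub hp)
          · rw [Finset.card_insert_of_notMem hfP1, hP1card, hM1def,
              Finset.card_erase_of_mem heM]
            omega
          · rw [mcovered_insert]
            rintro (h | h)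
            · rcases Sym2.mem_iff.mp h with rfl | rfl
              · exact huv rfl
              · exact hzu rfl
            · exact huP1 h
          · rintro w ⟨⟨gw, hgw, hwgw⟩, hwu⟩
            by_cases hgwe : gw = s(u, v)
            · subst hgwe
              rcases Sym2.mem_iff.mp hwgw with h | h
              · exact absurd h hwu
              · rw [h]
                exact mcovered_insert.mpr (Or.inl (Sym2.mem_mk_left v z))
            · by_cases hwz : w = z
              · rw [hwz]
                exact mcovered_insert.mpr (Or.inl (Sym2.mem_mk_right v z))
              · refine mcovered_insert.mpr (Or.inr (hlow ⟨⟨gw, Finset.mem_erase.mpr ⟨hgwe, hgw⟩, hwgw⟩, hwz⟩))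
          · refine ⟨z', ?_⟩
            intro w hw
            rcases mcovered_insert.mp hw with h | h
            · rcases Sym2.mem_iff.mp h with h1 | h1
              · rw [h1]
                exact Or.inl ⟨⟨_, heM, Sym2.mem_mk_right u v⟩, fun h' => huv h'.symm⟩
              · rw [h1]
                exact Or.inl ⟨⟨g, hgM, hzg⟩, hzu⟩
            · rcases hup h with ⟨hw1, _⟩ | hw'
              · rcases hw1 with ⟨gw, hgw, hwgw⟩
                have hwM : w ∈ mcovered M := ⟨gw, Finset.mem_of_mem_erase hgw, hwgw⟩
                have hwu : w ≠ u := by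
                  intro h'
                  exact huM1 ⟨gw, hgw, by rwa [h'] at hwgw⟩
                exact Or.inl ⟨hwM, hwu⟩
              · exact Or.inr hw'
        · -- case (b1): augment with e = s(u,v)
          right
          have hcovP1 : mcovered P1 ⊆ mcovered M1 ∪ mcovered N1 := by
            intro w hw
            have := mcovered_mono hP1sub hw
            rwa [mcovered_union] at this
          have hvP1 : v ∉ mcovered P1 := fun h => (hcovP1 h).elim hvM1 hvN1
          have huP1 : u ∉ mcovered P1 := fun h => (hcovP1 h).elim huM1 huN1
          have heP1 : s(u, v) ∉ P1 := fun h => huP1 ⟨_, h, Sym2.mem_mk_left u v⟩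
          refine ⟨insert (s(u, v)) P1, ?_, ?_, ?_⟩
          · refine hP1.ins ?_
            intro w hw
            rcases Sym2.mem_iff.mp hw with rfl | rfl
            · exact huP1
            · exact hvP1
          · intro p hp
            rcases Finset.mem_insert.mp hp with rfl | hp
            · exact Finset.mem_union_left _ heM
            · refine (Finset.union_subset_union (Finset.erase_subset _ _)
                (Finset.erase_subset _ _)) (hP1sub hp)
          · rw [Finset.card_insert_of_notMem heP1, hP1card, hN1def,
              Finset.card_erase_of_mem hfN]
            omega
      · -- end of path: swap e for f
        left
        have hvM1 : v ∉ mcovered (M.erase (s(u, v))) := by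
          rintro ⟨g', hg', hvg'⟩
          exact (Finset.mem_erase.mp hg').1 (hvMonly g' (Finset.mem_of_mem_erase hg') hvg')
        have huM1 : u ∉ mcovered (M.erase (s(u, v))) := by
          rintro ⟨g', hg', hug'⟩
          exact (Finset.mem_erase.mp hg').1 (huMonly g' (Finset.mem_of_mem_erase hg') hug')
        have hzM1 : z ∉ mcovered (M.erase (s(u, v))) :=
          fun h => hzM (mcovered_mono (Finset.erase_subset _ _) h)
        have hfM1 : s(v, z) ∉ M.erase (s(u, v)) :=
          fun h => hvM1 ⟨_, h, Sym2.mem_mk_left v z⟩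
        refine ⟨insert (s(v, z)) (M.erase (s(u, v))), ?_, ?_, ?_, ?_, ?_, ⟨z, ?_⟩⟩
        · refine (hM.ss (Finset.erase_subset _ _)).ins ?_
          intro w hw
          rcases Sym2.mem_iff.mp hw with rfl | rfl
          · exact hvM1
          · exact hzM1
        · intro p hp
          rcases Finset.mem_insert.mp hp with rfl | hp
          · exact Finset.mem_union_right _ hfN
          · exact Finset.mem_union_left _ (Finset.mem_of_mem_erase hp)
        · rw [Finset.card_insert_of_notMem hfM1, Finset.card_erase_of_mem heM]
          have : 1 ≤ M.card := Finset.card_pos.mpr ⟨_, heM⟩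
          omega
        · rw [mcovered_insert]
          rintro (h | h)
          · rcases Sym2.mem_iff.mp h with rfl | rfl
            · exact huv rfl
            · exact hzu rfl
          · exact huM1 h
        · rintro w ⟨⟨gw, hgw, hwgw⟩, hwu⟩
          by_cases hgwe : gw = s(u, v)
          · subst hgwe
            rcases Sym2.mem_iff.mp hwgw with h | h
            · exact absurd h hwu
            · rw [h]
              exact mcovered_insert.mpr (Or.inl (Sym2.mem_mk_left v z))
          · exact mcovered_insert.mpr (Or.inr ⟨gw, Finset.mem_erase.mpr ⟨hgwe, hgw⟩, hwgw⟩)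
        · intro w hw
          rcases mcovered_insert.mp hw with h | h
          · rcases Sym2.mem_iff.mp h with h1 | h1
            · rw [h1]
              exact Or.inl ⟨⟨_, heM, Sym2.mem_mk_right u v⟩, fun h' => huv h'.symm⟩
            · exact Or.inr h1
          · rcases h with ⟨gw, hgw, hwgw⟩
            have hwu : w ≠ u := by
              intro h'
              exact huM1 ⟨gw, hgw, by rwa [h'] at hwgw⟩
            exact Or.inl ⟨⟨gw, Finset.mem_of_mem_erase hgw, hwgw⟩, hwu⟩
    · -- v not covered by N: N ∪ {e} is larger
      right
      have hueN : s(u, v) ∉ N := fun h => huN ⟨_, h, Sym2.mem_mk_left u v⟩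
      refine ⟨insert (s(u, v)) N, ?_, ?_, ?_⟩
      · refine hN.ins ?_
        intro w hw
        rcases Sym2.mem_iff.mp hw with rfl | rfl
        · exact huN
        · exact hvN
      · intro p hp
        rcases Finset.mem_insert.mp hp with rfl | hp
        · exact Finset.mem_union_left _ heM
        · exact Finset.mem_union_right _ hp
      · rw [Finset.card_insert_of_notMem hueN]

lemma matching_bdd (G : SimpleGraph V) (W : Set V) :
    BddAbove {n | ∃ M, IsMatchingOn G W M ∧ M.card = n} := by
  refine ⟨Fintype.card (Sym2 V), ?_⟩
  rintro n ⟨M, _, rfl⟩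
  exact Finset.card_le_univ M

lemma empty_matching (G : SimpleGraph V) (W : Set V) : IsMatchingOn G W ∅ :=
  ⟨by simp, by simp, by simp⟩

lemma exists_mmax (G : SimpleGraph V) (W : Set V) :
    ∃ M, IsMatchingOn G W M ∧ M.card = mmax G W := by
  have h0 : (0 : ℕ) ∈ {n | ∃ M, IsMatchingOn G W M ∧ M.card = n} :=
    ⟨∅, empty_matching G W, Finset.card_empty⟩
  exact Nat.sSup_mem ⟨0, h0⟩ (matching_bdd G W)

lemma le_mmax {G : SimpleGraph V} {W : Set V} {M : Finset (Sym2 V)}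
    (h : IsMatchingOn G W M) : M.card ≤ mmax G W :=
  le_csSup (matching_bdd G W) ⟨M, h, rfl⟩

lemma mwL_le {G : SimpleGraph V} {L W : Set V} {M : Finset (Sym2 V)}
    (h : IsMatchingOn G W M) (h2 : M.card = mmax G W) :
    mwL G L W ≤ (mcovered M ∩ L).ncard :=
  Nat.sInf_le ⟨M, h, h2, rfl⟩

lemma exists_mwL (G : SimpleGraph V) (L W : Set V) :
    ∃ M, IsMatchingOn G W M ∧ M.card = mmax G W ∧ (mcovered M ∩ L).ncard = mwL G L W := by
  obtain ⟨M, h1, h2⟩ := exists_mmax G W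
  have hne : {k | ∃ M, IsMatchingOn G W M ∧ M.card = mmax G W ∧
      (mcovered M ∩ L).ncard = k}.Nonempty := ⟨_, M, h1, h2, rfl⟩
  exact Nat.sInf_mem hne


/-- weak dominance: revealing an additional leader node `u ∈ S` never
decreases the minimum number of leader nodes covered in a maximum matching. -/
theorem stmt3 (G : SimpleGraph V) (L F S : Set V)
    (hpart : L ∪ F = Set.univ) (hdisj : Disjoint L F) (hS : S ⊆ L)
    (u : V) (hu : u ∈ S) :
    mwL G L Sᶜ ≤ mwL G L (Sᶜ ∪ {u}) := by
  have huW : u ∉ Sᶜ := fun h => h hu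
  have huL : u ∈ L := hS hu
  have hWW' : Sᶜ ⊆ Sᶜ ∪ {u} := Set.subset_union_left
  have hmono : mmax G Sᶜ ≤ mmax G (Sᶜ ∪ {u}) := by
    obtain ⟨M, hM, hc⟩ := exists_mmax G Sᶜ
    rw [← hc]
    exact le_mmax ⟨hM.1, fun e he v hv => hWW' (hM.2.1 e he v hv), hM.2.2⟩
  obtain ⟨M', hM', hMc', hMk⟩ := exists_mwL G L (Sᶜ ∪ {u})
  by_cases huM : u ∈ mcovered M'
  · -- u is covered by the optimal matching of G[W']
    obtain ⟨e, heM, hue⟩ := huM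
    have hMd : ∀ g ∈ M', ¬ g.IsDiag := fun g hg =>
      (G.not_isDiag_of_mem_edgeSet (hM'.1 g hg) : ¬ g.IsDiag)
    obtain ⟨N, hN, hNc⟩ := exists_mmax G Sᶜ
    have hNd : ∀ g ∈ N, ¬ g.IsDiag := fun g hg =>
      (G.not_isDiag_of_mem_edgeSet (hN.1 g hg) : ¬ g.IsDiag)
    have huN : u ∉ mcovered N := by
      rintro ⟨f, hf, huf⟩
      exact huW (hN.2.1 f hf u huf)
    -- the matching M' minus the edge at u lives in Sᶜ
    have hM0 : IsMatchingOn G Sᶜ (M'.erase e) := by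
      refine ⟨fun g hg => hM'.1 g (Finset.mem_of_mem_erase hg), ?_,
        hM'.2.2.mono (Finset.coe_subset.mpr (Finset.erase_subset _ _))⟩
      intro g hg w hw
      rcases hM'.2.1 g (Finset.mem_of_mem_erase hg) w hw with h | h
      · exact h
      · exfalso
        rw [Set.mem_singleton_iff] at h
        subst h
        have : g = e := PM.eq_edge hM'.2.2 (Finset.mem_of_mem_erase hg) heM hw hue
        exact (Finset.mem_erase.mp hg).1 this
    have hM0card : M'.card - 1 ≤ mmax G Sᶜ := by
      have := le_mmax hM0
      rwa [Finset.card_erase_of_mem heM] at this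
    rcases lt_or_ge N.card M'.card with hlt | hge
    · -- mmax Sᶜ = M'.card - 1 : M' \ {e} is a maximum matching of G[Sᶜ]
      have hMpos : 1 ≤ M'.card := Finset.card_pos.mpr ⟨_, heM⟩
      have hcard0 : (M'.erase e).card = mmax G Sᶜ := by
        rw [Finset.card_erase_of_mem heM]
        omega
      calc mwL G L Sᶜ ≤ (mcovered (M'.erase e) ∩ L).ncard := mwL_le hM0 hcard0
        _ ≤ (mcovered M' ∩ L).ncard :=
            Set.ncard_le_ncard (Set.inter_subset_inter_left _
              (mcovered_mono (Finset.erase_subset _ _))) (Set.toFinite _)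
        _ = mwL G L (Sᶜ ∪ {u}) := hMk
    · -- N.card ≥ M'.card : use the alternating path lemma
      rcases path_lemma N M' u hM'.2.2 hN.2.2 hMd hNd ⟨e, heM, hue⟩ huN with
        (⟨P, hP, hPsub, hPcard, huP, _, z, hPup⟩ | ⟨P, hP, hPsub, hPcard⟩)
      · -- case (a): P is a maximum matching of G[Sᶜ]
        have hPedges : ∀ g ∈ P, g ∈ G.edgeSet := by
          intro g hg
          rcases Finset.mem_union.mp (hPsub hg) with h | h
          · exact hM'.1 g h
          · exact hN.1 g h
        have hPon : IsMatchingOn G Sᶜ P := by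
          refine ⟨hPedges, ?_, hP⟩
          intro g hg w hw
          rcases Finset.mem_union.mp (hPsub hg) with h | h
          · rcases hM'.2.1 g h w hw with h' | h'
            · exact h'
            · exfalso
              rw [Set.mem_singleton_iff] at h'
              subst h'
              exact huP ⟨g, hg, hw⟩
          · exact hN.2.1 g h w hw
        have hPmax : P.card = mmax G Sᶜ := by
          refine le_antisymm (le_mmax hPon) ?_
          rw [hPcard, hMc']
          exact hmono
        have hkpos : 1 ≤ (mcovered M' ∩ L).ncard :=
          (Set.ncard_pos (Set.toFinite _)).mpr ⟨u, ⟨e, heM, hue⟩, huL⟩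
        have hsub2 : mcovered P ∩ L ⊆ ((mcovered M' ∩ L) \ {u}) ∪ {z} := by
          rintro w ⟨hwP, hwL⟩
          rcases hPup hwP with ⟨hwM, hwu⟩ | hwz
          · exact Or.inl ⟨⟨hwM, hwL⟩, hwu⟩
          · exact Or.inr hwz
        have hbound : (mcovered P ∩ L).ncard ≤ (mcovered M' ∩ L).ncard := by
          calc (mcovered P ∩ L).ncard
              ≤ (((mcovered M' ∩ L) \ {u}) ∪ {z}).ncard :=
                Set.ncard_le_ncard hsub2 (Set.toFinite _)
            _ ≤ ((mcovered M' ∩ L) \ {u}).ncard + ({z} : Set V).ncard :=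
                Set.ncard_union_le _ _
            _ = ((mcovered M' ∩ L).ncard - 1) + 1 := by
                have humem : u ∈ mcovered M' ∩ L := ⟨⟨e, heM, hue⟩, huL⟩
                rw [Set.ncard_diff_singleton_of_mem humem,
                  Set.ncard_singleton]
            _ ≤ (mcovered M' ∩ L).ncard := by omega
        calc mwL G L Sᶜ ≤ (mcovered P ∩ L).ncard := mwL_le hPon hPmax
          _ ≤ (mcovered M' ∩ L).ncard := hbound
          _ = mwL G L (Sᶜ ∪ {u}) := hMk
      · -- case (b): contradiction, a matching of G[W'] larger than the maximum
        exfalso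
        have hPon : IsMatchingOn G (Sᶜ ∪ {u}) P := by
          refine ⟨?_, ?_, hP⟩
          · intro g hg
            rcases Finset.mem_union.mp (hPsub hg) with h | h
            · exact hM'.1 g h
            · exact hN.1 g h
          · intro g hg w hw
            rcases Finset.mem_union.mp (hPsub hg) with h | h
            · exact hM'.2.1 g h w hw
            · exact hWW' (hN.2.1 g h w hw)
        have := le_mmax hPon
        rw [hPcard, ← hMc'] at this
        omega
  · -- u not covered: M' itself is a maximum matching of G[Sᶜ]
    have hMon : IsMatchingOn G Sᶜ M' := by
      refine ⟨hM'.1, ?_, hM'.2.2⟩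
      intro g hg w hw
      rcases hM'.2.1 g hg w hw with h | h
      · exact h
      · exfalso
        rw [Set.mem_singleton_iff] at h
        subst h
        exact huM ⟨g, hg, hw⟩
    have hmax : M'.card = mmax G Sᶜ := by
      refine le_antisymm (le_mmax hMon) ?_
      rw [hMc']
      exact hmono
    calc mwL G L Sᶜ ≤ (mcovered M' ∩ L).ncard := mwL_le hMon hmax
      _ = mwL G L (Sᶜ ∪ {u}) := hMk
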